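/- Let $G$ be a $d$-regular graph on $N$ vertices whose second-largest eigenvalue in absolute value is at most $\lambda$, partition $V(G)$ into sets $U_1, \ldots, U_{N/k}$ each of size $k$, and let $H$ be the bipartite graph with parts $V(G)$ and $U = \{u_1, \ldots, u_{N/k}\}$ where $v$ is adjacent to $u_i$ iff $v$ has a $G$-neighbour in $U_i$. Assume $\frac{2\lambda k}{d} \le \min(\epsilon, \tfrac12)$ and $N \ge (1+\epsilon)kn$. Then every subset $X \subseteq V(G)$ with $|X| \le n$ satisfies $|N_H(X)| \ge |X|$. -/

import Mathlib

open Matrix BigOperators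

lemma repr_mulVec (N : ℕ) (A : Matrix (Fin N) (Fin N) ℝ) (hA : A.IsHermitian)
    (f : EuclideanSpace ℝ (Fin N)) (i : Fin N) :
    hA.eigenvectorBasis.repr ((WithLp.equiv 2 _).symm (A *ᵥ f)) i
      = hA.eigenvalues i * hA.eigenvectorBasis.repr f i := by
  rw [OrthonormalBasis.repr_apply_apply, OrthonormalBasis.repr_apply_apply]
  have hsym : Aᵀ = A := by
    have := hA; rwa [Matrix.IsHermitian, Matrix.conjTranspose_eq_transpose_of_trivial] at this
  have hAb := hA.mulVec_eigenvectorBasis i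
  have hvm : ∀ x : Fin N → ℝ, x ᵥ* A = A *ᵥ x := by
    intro x
    conv_lhs => rw [← hsym]
    rw [vecMul_transpose]
  have key : ∀ u F : Fin N → ℝ, A *ᵥ u = hA.eigenvalues i • u →
      u ⬝ᵥ (A *ᵥ F) = hA.eigenvalues i * (u ⬝ᵥ F) := by
    intro u F hu
    rw [dotProduct_mulVec, hvm, hu, smul_dotProduct]
    simp
  have e1 : (inner ℝ (hA.eigenvectorBasis i) ((WithLp.equiv 2 _).symm (A *ᵥ f)) : ℝ)
      = (fun v => hA.eigenvectorBasis i v) ⬝ᵥ (A *ᵥ (fun v => f v)) := by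
    simp [EuclideanSpace.inner_eq_star_dotProduct, dotProduct, mul_comm]
  have e2 : (inner ℝ (hA.eigenvectorBasis i) f : ℝ)
      = (fun v => hA.eigenvectorBasis i v) ⬝ᵥ (fun v => f v) := by
    simp [EuclideanSpace.inner_eq_star_dotProduct, dotProduct, mul_comm]
  rw [e1, e2]
  exact key _ _ hAb

lemma spec_bound (N : ℕ) (A : Matrix (Fin N) (Fin N) ℝ) (hA : A.IsHermitian)
    (d lam : ℝ) (hlam : 0 ≤ lam) (hld : lam < d) (i₀ : Fin N)
    (h0 : hA.eigenvalues i₀ = d) (hoth : ∀ i, i ≠ i₀ → |hA.eigenvalues i| ≤ lam)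
    (g f : Fin N → ℝ) (hg : A *ᵥ g = d • g) :
    (∑ v, (A *ᵥ f) v ^ 2) * (∑ v, g v ^ 2)
      ≤ d ^ 2 * (∑ v, g v * f v) ^ 2 + lam ^ 2 * (∑ v, f v ^ 2) * (∑ v, g v ^ 2) := by
  classical
  set b := hA.eigenvectorBasis with hb
  set F : EuclideanSpace ℝ (Fin N) := (WithLp.equiv 2 _).symm f with hF
  set Gv : EuclideanSpace ℝ (Fin N) := (WithLp.equiv 2 _).symm g with hGv
  set c : Fin N → ℝ := fun i => b.repr F i with hc
  set gc : Fin N → ℝ := fun i => b.repr Gv i with hgc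
  have hinner : ∀ x y : EuclideanSpace ℝ (Fin N), (inner ℝ x y : ℝ) = ∑ v, x v * y v := by
    intro x y; simp [EuclideanSpace.inner_eq_star_dotProduct, dotProduct, mul_comm]
  -- repr of A *ᵥ f
  have hrf : ∀ i, b.repr ((WithLp.equiv 2 _).symm (A *ᵥ f)) i = hA.eigenvalues i * c i :=
    fun i => repr_mulVec N A hA F i
  have hrg : ∀ i, b.repr ((WithLp.equiv 2 _).symm (A *ᵥ g)) i = hA.eigenvalues i * gc i :=
    fun i => repr_mulVec N A hA Gv i
  -- gc vanishes off i₀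
  have hgc0 : ∀ i, i ≠ i₀ → gc i = 0 := by
    intro i hi
    have h1 := hrg i
    rw [hg] at h1
    have h2 : ((WithLp.equiv 2 (Fin N → ℝ)).symm (d • g)) = d • Gv := rfl
    rw [h2, _root_.map_smul] at h1
    have h3 : d * gc i = hA.eigenvalues i * gc i := h1
    have hne : hA.eigenvalues i ≠ d := by
      intro h; have := hoth i hi; rw [h] at this
      have : d ≤ lam := le_trans (le_abs_self d) this
      linarith
    have h4 : (d - hA.eigenvalues i) * gc i = 0 := by ring_nf; linarith [h3]
    rcases mul_eq_zero.mp h4 with h5 | h5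
    · exact absurd (by linarith : hA.eigenvalues i = d) hne
    · exact h5
  -- Parseval
  have hpars : ∀ x y : EuclideanSpace ℝ (Fin N), (inner ℝ x y : ℝ) = ∑ i, b.repr x i * b.repr y i := by
    intro x y
    rw [← b.repr.inner_map_map x y, hinner]
  have eq1 : ∑ v, f v ^ 2 = ∑ i, c i ^ 2 := by
    have h := hpars F F
    rw [hinner] at h
    simpa [hc, hF, PiLp.toLp_apply, pow_two] using h
  have eq3 : ∑ v, g v ^ 2 = gc i₀ ^ 2 := by
    have h := hpars Gv Gv
    rw [hinner] at h
    have h2 : ∑ i, b.repr Gv i * b.repr Gv i = b.repr Gv i₀ * b.repr Gv i₀ :=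
      Finset.sum_eq_single i₀
        (fun i _ hi => by
          have h0' : b.repr Gv i = 0 := hgc0 i hi
          rw [h0']; ring) (by simp)
    rw [h2] at h
    simpa [hgc, hGv, PiLp.toLp_apply, pow_two] using h
  have eq2 : ∑ v, (A *ᵥ f) v ^ 2 = ∑ i, (hA.eigenvalues i * c i) ^ 2 := by
    have h := hpars ((WithLp.equiv 2 _).symm (A *ᵥ f)) ((WithLp.equiv 2 _).symm (A *ᵥ f))
    rw [hinner] at h
    simp only [hrf] at h
    simpa [PiLp.toLp_apply, pow_two] using h
  have eq4 : ∑ v, g v * f v = gc i₀ * c i₀ := by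
    have h := hpars Gv F
    rw [hinner] at h
    have h2 : ∑ i, b.repr Gv i * b.repr F i = b.repr Gv i₀ * b.repr F i₀ :=
      Finset.sum_eq_single i₀
        (fun i _ hi => by
          have h0' : b.repr Gv i = 0 := hgc0 i hi
          rw [h0']; ring) (by simp)
    rw [h2] at h
    simpa [hgc, hc, hGv, hF, PiLp.toLp_apply] using h
  rw [eq1, eq2, eq3, eq4]
  have key : ∑ i, (hA.eigenvalues i * c i) ^ 2 ≤ d ^ 2 * c i₀ ^ 2 + lam ^ 2 * ∑ i, c i ^ 2 := by
    rw [← Finset.add_sum_erase Finset.univ _ (Finset.mem_univ i₀), h0]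
    have h5 : ∑ i ∈ Finset.univ.erase i₀, (hA.eigenvalues i * c i) ^ 2
        ≤ ∑ i ∈ Finset.univ.erase i₀, lam ^ 2 * c i ^ 2 := by
      apply Finset.sum_le_sum
      intro i hi
      have habs := abs_le.mp (hoth i (Finset.mem_erase.mp hi).1)
      have : hA.eigenvalues i ^ 2 ≤ lam ^ 2 := sq_le_sq' habs.1 habs.2
      nlinarith [sq_nonneg (c i)]
    have h6 : ∑ i ∈ Finset.univ.erase i₀, lam ^ 2 * c i ^ 2 ≤ lam ^ 2 * ∑ i, c i ^ 2 := by
      rw [← Finset.mul_sum]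
      apply mul_le_mul_of_nonneg_left _ (sq_nonneg lam)
      exact Finset.sum_le_sum_of_subset_of_nonneg (Finset.erase_subset _ _)
        (fun i _ _ => sq_nonneg _)
    calc (d * c i₀) ^ 2 + ∑ i ∈ Finset.univ.erase i₀, (hA.eigenvalues i * c i) ^ 2
        ≤ (d * c i₀) ^ 2 + lam ^ 2 * ∑ i, c i ^ 2 := by linarith
      _ = d ^ 2 * c i₀ ^ 2 + lam ^ 2 * ∑ i, c i ^ 2 := by ring
  calc (∑ i, (hA.eigenvalues i * c i) ^ 2) * gc i₀ ^ 2
      ≤ (d ^ 2 * c i₀ ^ 2 + lam ^ 2 * ∑ i, c i ^ 2) * gc i₀ ^ 2 :=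
        mul_le_mul_of_nonneg_right key (sq_nonneg _)
    _ = d ^ 2 * (gc i₀ * c i₀) ^ 2 + lam ^ 2 * (∑ i, c i ^ 2) * gc i₀ ^ 2 := by ring


lemma arith_ld (k d lam : ℝ) (hk : 1 ≤ k) (hlam : 0 ≤ lam) (hd : 0 < d)
    (h2 : 2 * lam * k ≤ d / 2) : lam < d := by nlinarith

lemma arith_kl (k d lam ε : ℝ) (hk : 1 ≤ k) (hlam : 0 ≤ lam) (hε : 0 < ε) (hd : 0 < d)
    (h1 : 2 * lam * k ≤ ε * d) (h2 : 2 * lam * k ≤ d / 2) :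
    k * lam ^ 2 * (1 + ε) ≤ ε * d ^ 2 := by
  have p1 : (0:ℝ) ≤ 2 * lam * k := by positivity
  have e1 : (2 * lam * k) * (2 * lam * k) ≤ (ε * d) * (d / 2) :=
    mul_le_mul h1 h2 p1 (by positivity)
  have e2 : (2 * lam * k) * (2 * lam * k) ≤ (d / 2) * (d / 2) :=
    mul_le_mul h2 h2 p1 (by positivity)
  have hl2k : lam ^ 2 * k ≤ lam ^ 2 * k ^ 2 := by
    nlinarith [mul_nonneg (sq_nonneg lam)
      (mul_nonneg (by linarith : (0:ℝ) ≤ k) (by linarith : (0:ℝ) ≤ k - 1))]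
  have h8 : lam ^ 2 * k ^ 2 ≤ ε * d ^ 2 / 8 := by nlinarith [e1]
  have h16 : lam ^ 2 * k ^ 2 ≤ d ^ 2 / 16 := by nlinarith [e2]
  nlinarith [hl2k, h8, mul_le_mul_of_nonneg_right h16 hε.le,
    mul_le_mul_of_nonneg_right hl2k hε.le]

lemma arith_key (k d lam ε x Nr m : ℝ) (hk : 1 ≤ k) (hlam : 0 ≤ lam) (hε : 0 < ε)
    (hd : 0 < d) (hx : 1 ≤ x) (hm : 0 ≤ m) (hN : 0 ≤ Nr)
    (hkl : k * lam ^ 2 * (1 + ε) ≤ ε * d ^ 2) (hxn : (1 + ε) * (k * x) ≤ Nr)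
    (hchain : d ^ 2 * x ^ 2 * Nr ≤ m * (d ^ 2 * x ^ 2 + lam ^ 2 * x * Nr)) :
    k * x ≤ m := by
  have e1 : (1 + ε) * (k * d ^ 2 * x) ≤ d ^ 2 * Nr := by
    nlinarith [mul_le_mul_of_nonneg_left hxn (sq_nonneg d)]
  have e2 : (1 + ε) * (k * lam ^ 2 * Nr) ≤ ε * (d ^ 2 * Nr) := by
    nlinarith [mul_le_mul_of_nonneg_right hkl hN]
  have key1 : k * d ^ 2 * x + k * lam ^ 2 * Nr ≤ d ^ 2 * Nr := by nlinarith [e1, e2]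
  have hB : (0:ℝ) < d ^ 2 * x ^ 2 + lam ^ 2 * x * Nr := by
    have hp1 : (0:ℝ) < d ^ 2 * x ^ 2 := by positivity
    have hp2 : (0:ℝ) ≤ lam ^ 2 * x * Nr := by
      apply mul_nonneg _ hN
      apply mul_nonneg (sq_nonneg _) (by linarith)
    linarith
  have harith : k * x * (d ^ 2 * x ^ 2 + lam ^ 2 * x * Nr) ≤ d ^ 2 * x ^ 2 * Nr := by
    nlinarith [mul_le_mul_of_nonneg_right key1 (sq_nonneg x)]
  exact le_of_mul_le_mul_right (harith.trans hchain) hB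

/-- Expander neighbourhood claim: let `G` be a `d`-regular graph on `N` vertices
whose eigenvalues other than the largest (which equals `d`) have absolute value at
most `lam`, let `V(G)` be partitioned into `N/k` groups of size `k`, and let `H`
be the bipartite graph joining `v ∈ V(G)` to group `i` iff `v` has a
`G`-neighbour in group `i`.  If `2·lam·k/d ≤ min(ε, 1/2)` and `N ≥ (1+ε)kn`,
then every `X ⊆ V(G)` with `|X| ≤ n` satisfies `|N_H(X)| ≥ |X|`. -/
theorem stmt19 (N k n d : ℕ) (lam ε : ℝ)
    (hd : 0 < d) (hk : 0 < k) (hlam : 0 ≤ lam) (hε : 0 < ε)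
    (G : SimpleGraph (Fin N)) [DecidableRel G.Adj]
    (hreg : G.IsRegularOfDegree d)
    (hA : (G.adjMatrix ℝ).IsHermitian)
    (heig : ∃ i₀ : Fin N, hA.eigenvalues i₀ = d ∧
      ∀ i : Fin N, i ≠ i₀ → |hA.eigenvalues i| ≤ lam)
    (U : Fin N → Fin (N / k))
    (hU : ∀ i : Fin (N / k), {v : Fin N | U v = i}.ncard = k)
    (hexp : 2 * lam * k / d ≤ min ε (1 / 2))
    (hN : (1 + ε) * k * n ≤ N) :
    ∀ X : Finset (Fin N), X.card ≤ n →
      X.card ≤ {i : Fin (N / k) | ∃ v ∈ X, ∃ w : Fin N, U w = i ∧ G.Adj v w}.ncard := by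
  classical
  intro X hX
  by_cases hx0 : X.card = 0
  · simp [hx0]
  have hxpos : 0 < X.card := Nat.pos_of_ne_zero hx0
  obtain ⟨i₀, h0, hoth⟩ := heig
  set A := G.adjMatrix ℝ with hAdef
  set x : ℝ := (X.card : ℝ) with hxdef
  have hx1 : (1:ℝ) ≤ x := by rw [hxdef]; exact_mod_cast hxpos
  have hd' : (0:ℝ) < d := by exact_mod_cast hd
  have hk' : (1:ℝ) ≤ k := by exact_mod_cast hk
  have hexp1 : 2 * lam * k ≤ ε * d := by
    have := (div_le_iff₀ hd').mp (hexp.trans (min_le_left _ _))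
    linarith
  have hexp2 : 2 * lam * k ≤ (d:ℝ) / 2 := by
    have := (div_le_iff₀ hd').mp (hexp.trans (min_le_right _ _))
    linarith
  have hld : lam < d := arith_ld _ _ _ hk' hlam hd' hexp2
  -- indicator and all-ones vectors
  set f : Fin N → ℝ := fun v => if v ∈ X then 1 else 0 with hfdef
  set g : Fin N → ℝ := fun _ => 1 with hgdef
  have hg : A *ᵥ g = (d : ℝ) • g := by
    funext v
    have h1 : (A *ᵥ g) v = ∑ u ∈ G.neighborFinset v, g u := G.adjMatrix_mulVec_apply v g
    rw [h1]
    simp [hgdef, hreg v]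
  have hspec := spec_bound N A hA d lam hlam hld i₀ h0 hoth g f hg
  have hsum_f : ∑ v, f v = x := by
    simp [hfdef, hxdef]
  have hsum_g : ∑ v, g v ^ 2 = (N : ℝ) := by simp [hgdef]
  have hsum_gf : ∑ v, g v * f v = x := by
    simp only [hgdef, one_mul]; exact hsum_f
  have hsum_f2 : ∑ v, f v ^ 2 = x := by
    rw [← hsum_f]
    apply Finset.sum_congr rfl
    intro v _
    by_cases hv : v ∈ X <;> simp [hfdef, hv]
  rw [hsum_g, hsum_gf, hsum_f2] at hspec
  -- the G-neighbourhood of X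
  set Y : Finset (Fin N) := Finset.univ.filter (fun w => ∃ v ∈ X, G.Adj v w) with hYdef
  set s : Fin N → ℝ := fun v => (A *ᵥ f) v with hsdef
  have hs_eq : ∀ v, s v = ∑ u ∈ G.neighborFinset v, f u := by
    intro v; rw [hsdef]; exact G.adjMatrix_mulVec_apply v f
  have hsupp : ∀ v ∉ Y, s v = 0 := by
    intro v hv
    rw [hYdef] at hv
    simp only [Finset.mem_filter, Finset.mem_univ, true_and, not_exists, not_and] at hv
    rw [hs_eq]
    apply Finset.sum_eq_zero
    intro u hu
    rw [hfdef]
    simp only [ite_eq_right_iff, one_ne_zero]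
    intro huX
    exact hv u huX ((SimpleGraph.mem_neighborFinset _ _ _).mp hu).symm
  have hsum_s : ∑ v, s v = (d : ℝ) * x := by
    have h1 : ∑ v, s v = g ⬝ᵥ (A *ᵥ f) := by
      simp [dotProduct, hgdef, hsdef]
    have h2 : g ᵥ* A = fun _ => (d : ℝ) := by
      funext v
      have h3 : (g ᵥ* A) v = ∑ u ∈ G.neighborFinset v, g u := G.adjMatrix_vecMul_apply v g
      rw [h3]; simp [hgdef, hreg v]
    rw [h1, Matrix.dotProduct_mulVec, h2]
    simp only [dotProduct]
    rw [← Finset.mul_sum, hsum_f]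
  -- Cauchy–Schwarz
  have hCS : ((d : ℝ) * x) ^ 2 ≤ (Y.card : ℝ) * ∑ v, s v ^ 2 := by
    have h1 : ∑ v ∈ Y, s v = ∑ v, s v :=
      Finset.sum_subset (Finset.subset_univ _) (fun v _ hv => hsupp v hv)
    have h2 : (∑ v ∈ Y, s v) ^ 2 ≤ (Y.card : ℝ) * ∑ v ∈ Y, s v ^ 2 := by
      exact_mod_cast sq_sum_le_card_mul_sum_sq (s := Y) (f := s)
    have h3 : ∑ v ∈ Y, s v ^ 2 ≤ ∑ v, s v ^ 2 :=
      Finset.sum_le_sum_of_subset_of_nonneg (Finset.subset_univ _)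
        (fun v _ _ => sq_nonneg _)
    calc ((d : ℝ) * x) ^ 2 = (∑ v ∈ Y, s v) ^ 2 := by rw [h1, hsum_s]
      _ ≤ (Y.card : ℝ) * ∑ v ∈ Y, s v ^ 2 := h2
      _ ≤ (Y.card : ℝ) * ∑ v, s v ^ 2 :=
          mul_le_mul_of_nonneg_left h3 (Nat.cast_nonneg _)
  -- combine
  have hm0 : (0:ℝ) ≤ (Y.card : ℝ) := Nat.cast_nonneg _
  have hN0 : (0:ℝ) ≤ (N : ℝ) := Nat.cast_nonneg _
  have hchain : (d:ℝ)^2 * x^2 * N ≤ (Y.card : ℝ) * ((d:ℝ)^2 * x^2 + lam^2 * x * N) := by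
    have h1 : ((d:ℝ) * x)^2 * N ≤ ((Y.card : ℝ) * ∑ v, s v ^ 2) * N :=
      mul_le_mul_of_nonneg_right hCS hN0
    have h2 : (Y.card : ℝ) * ((∑ v, s v ^ 2) * N)
        ≤ (Y.card : ℝ) * ((d:ℝ)^2 * x^2 + lam^2 * x * N) :=
      mul_le_mul_of_nonneg_left hspec hm0
    nlinarith [h1, h2]
  have hxn : (1 + ε) * ((k:ℝ) * x) ≤ N := by
    have hxn' : x ≤ (n : ℝ) := by rw [hxdef]; exact_mod_cast hX
    have h4 : (1 + ε) * ((k:ℝ) * x) ≤ (1 + ε) * ((k:ℝ) * n) := by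
      apply mul_le_mul_of_nonneg_left _ (by linarith)
      exact mul_le_mul_of_nonneg_left hxn' (by linarith)
    calc (1 + ε) * ((k:ℝ) * x) ≤ (1 + ε) * ((k:ℝ) * n) := h4
      _ = (1 + ε) * k * n := by ring
      _ ≤ N := hN
  have hkl : (k:ℝ) * lam ^ 2 * (1 + ε) ≤ ε * (d:ℝ) ^ 2 :=
    arith_kl _ _ _ _ hk' hlam hε hd' hexp1 hexp2
  have hkxm : (k:ℝ) * x ≤ (Y.card : ℝ) :=
    arith_key _ _ _ _ _ _ _ hk' hlam hε hd' hx1 hm0 hN0 hkl hxn hchain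
  have hkxm' : k * X.card ≤ Y.card := by
    rw [hxdef] at hkxm
    exact_mod_cast hkxm
  -- from Y to group count
  set T : Finset (Fin (N / k)) :=
    Finset.univ.filter (fun i => ∃ v ∈ X, ∃ w : Fin N, U w = i ∧ G.Adj v w) with hTdef
  have hfib : ∀ i ∈ Y.image U, (Y.filter (fun w => U w = i)).card ≤ k := by
    intro i _
    have hsub : (Y.filter (fun w => U w = i)) ⊆ {v : Fin N | U v = i}.toFinset := by
      intro w hw
      rw [Set.mem_toFinset]
      exact (Finset.mem_filter.mp hw).2
    calc (Y.filter (fun w => U w = i)).card ≤ {v : Fin N | U v = i}.toFinset.card :=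
          Finset.card_le_card hsub
      _ = {v : Fin N | U v = i}.ncard := (Set.ncard_eq_toFinset_card' _).symm
      _ = k := hU i
  have hYT : Y.card ≤ k * T.card := by
    have h1 : Y.card ≤ k * (Y.image U).card := Finset.card_le_mul_card_image Y k hfib
    have h2 : Y.image U ⊆ T := by
      intro i hi
      obtain ⟨w, hw, rfl⟩ := Finset.mem_image.mp hi
      obtain ⟨v, hvX, hadj⟩ := (Finset.mem_filter.mp hw).2
      rw [hTdef]
      simp only [Finset.mem_filter, Finset.mem_univ, true_and]
      exact ⟨v, hvX, w, rfl, hadj⟩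
    exact h1.trans (Nat.mul_le_mul_left k (Finset.card_le_card h2))
  have hfin : X.card ≤ T.card := by
    have h5 := hkxm'.trans hYT
    exact Nat.le_of_mul_le_mul_left h5 hk
  have hTS : {i : Fin (N / k) | ∃ v ∈ X, ∃ w : Fin N, U w = i ∧ G.Adj v w}.ncard = T.card := by
    have h6 : {i : Fin (N / k) | ∃ v ∈ X, ∃ w : Fin N, U w = i ∧ G.Adj v w} = ↑T := by
      rw [hTdef]; ext i; simp
    rw [h6, Set.ncard_coe_finset]
  rw [hTS]
  exact hfin
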